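/- Two rooted Σ-colored multitrees T and T' are rooted isomorphic if and only if their signatures are equal: σ(T) = σ(T'), where σ(T) = (δ(τ), M(τ)) for the ordered tree τ on T that lexicographically maximizes first δ and then M. -/

import Mathlib

inductive OTree (S : Type) : Type where
  | node : S → List (ℕ × OTree S) → OTree S

namespace OTree

variable {S : Type}

mutual
  def delta : OTree S → ℕ → List (S × ℕ)
    | .node c l, d => (c, d) :: deltaList l d
  def deltaList : List (ℕ × OTree S) → ℕ → List (S × ℕ)
    | [], _ => []
    | (_, t) :: rest, d => delta t (d + 1) ++ deltaList rest d
end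

mutual
  def mseq : OTree S → List ℕ
    | .node _ l => mseqList l
  def mseqList : List (ℕ × OTree S) → List ℕ
    | [] => []
    | (m, t) :: rest => (m :: mseq t) ++ mseqList rest
end

inductive RIso : OTree S → OTree S → Prop where
  | node (c : S) (l l' : List (ℕ × OTree S))
      (e : Fin l.length ≃ Fin l'.length)
      (h1 : ∀ i : Fin l.length, (l.get i).1 = (l'.get (e i)).1)
      (h2 : ∀ i : Fin l.length, RIso (l.get i).2 (l'.get (e i)).2) :
      RIso (.node c l) (.node c l')

inductive IsSubtree : OTree S → OTree S → Prop where
  | refl (t : OTree S) : IsSubtree t t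
  | child {t u : OTree S} {c : S} {l : List (ℕ × OTree S)} {m : ℕ} :
      (m, u) ∈ l → IsSubtree t u → IsSubtree t (.node c l)

def deltaLt [LinearOrder S] (a b : List (S × ℕ)) : Prop :=
  List.Lex (Prod.Lex (· < ·) (· < ·)) a b

def sigLt [LinearOrder S] (a b : List (S × ℕ) × List ℕ) : Prop :=
  deltaLt a.1 b.1 ∨ (a.1 = b.1 ∧ List.Lex (· < ·) a.2 b.2)

def sigLe [LinearOrder S] (a b : List (S × ℕ) × List ℕ) : Prop :=
  a = b ∨ sigLt a b

def sigOf (t : OTree S) : List (S × ℕ) × List ℕ := (t.delta 0, t.mseq)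

def IsCanonical [LinearOrder S] (τ : OTree S) : Prop :=
  ∀ τ', RIso τ' τ → sigLe (sigOf τ') (sigOf τ)

def IsSignature [LinearOrder S] (T : OTree S) (s : List (S × ℕ) × List ℕ) : Prop :=
  (∃ τ, RIso τ T ∧ sigOf τ = s) ∧ ∀ τ, RIso τ T → sigLe (sigOf τ) s

def shiftk (k : ℕ) (l : List (S × ℕ)) : List (S × ℕ) := l.map fun p => (p.1, p.2 + k)

end OTree

namespace OTree

section Aux

variable {S : Type}

/-- `RIso` is reflexive. -/
theorem riso_refl : ∀ t : OTree S, RIso t t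
  | .node c l =>
    RIso.node c l l (Equiv.refl _) (fun _ => rfl)
      (fun i => riso_refl (l.get i).2)
termination_by t => sizeOf t
decreasing_by
  have h2 : sizeOf (l.get i) < sizeOf l := List.sizeOf_lt_of_mem (List.get_mem l i)
  have h3 : sizeOf (l.get i).2 < sizeOf (l.get i) := by
    obtain ⟨m, u⟩ := l.get i; simp only [Prod.mk.sizeOf_spec]; omega
  simp only [OTree.node.sizeOf_spec]
  omega

/-- `RIso` is symmetric. -/
theorem riso_symm {t t' : OTree S} (h : RIso t t') : RIso t' t := by
  induction h with
  | node c l l' e h1 h2 ih =>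
    refine RIso.node c l' l e.symm (fun j => ?_) (fun j => ?_)
    · have := h1 (e.symm j)
      rwa [e.apply_symm_apply, eq_comm] at this
    · have := ih (e.symm j)
      rwa [e.apply_symm_apply] at this

/-- `RIso` is transitive. -/
theorem riso_trans {a b : OTree S} (h : RIso a b) : ∀ {c}, RIso b c → RIso a c := by
  induction h with
  | node cc l l' e h1 h2 ih =>
    intro c h'
    cases h' with
    | node _ _ l'' e' h1' h2' =>
      exact RIso.node cc l l'' (e.trans e')
        (fun i => (h1 i).trans (h1' (e i)))
        (fun i => ih i (h2' (e i)))

section Lin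
variable [LinearOrder S]

instance : IsAsymm (S × ℕ) (Prod.Lex (· < ·) (· < ·)) :=
  ⟨fun a b h1 h2 => absurd (IsTrans.trans a b a h1 h2) (irrefl a)⟩

theorem deltaLt_asymm {a b : List (S × ℕ)} (h : deltaLt a b) (h' : deltaLt b a) :
    False :=
  asymm (show List.Lex (Prod.Lex (· < ·) (· < ·)) a b from h) h'

theorem sigLe_antisymm {a b : List (S × ℕ) × List ℕ}
    (h : sigLe a b) (h' : sigLe b a) : a = b := by
  rcases h with h | h
  · exact h
  rcases h' with h' | h'
  · exact h'.symm
  exfalso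
  rcases h with h | ⟨he, h⟩ <;> rcases h' with h' | ⟨he', h'⟩
  · exact deltaLt_asymm h h'
  · rw [he'] at h; exact deltaLt_asymm h h
  · rw [he] at h'; exact deltaLt_asymm h' h'
  · exact asymm (show List.Lex (· < ·) a.2 b.2 from h) h'

end Lin

mutual
theorem delta_depth : ∀ (t : OTree S) (d : ℕ), ∀ p ∈ delta t d, d ≤ p.2
  | .node c l, d => by
    intro p hp
    rw [delta] at hp
    rcases List.mem_cons.1 hp with h | h
    · subst h; exact le_refl d
    · have := deltaList_depth l d p h
      omega
  termination_by t => sizeOf t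

theorem deltaList_depth : ∀ (l : List (ℕ × OTree S)) (d : ℕ),
    ∀ p ∈ deltaList l d, d + 1 ≤ p.2
  | [], _ => by intro p hp; rw [deltaList] at hp; cases hp
  | (m, t) :: rest, d => by
    intro p hp
    rw [deltaList] at hp
    rcases List.mem_append.1 hp with h | h
    · exact delta_depth t (d + 1) p h
    · exact deltaList_depth rest d p h
  termination_by l => sizeOf l
end

mutual
theorem delta_length : ∀ (t : OTree S) (d : ℕ),
    (delta t d).length = (mseq t).length + 1
  | .node c l, d => by
    rw [delta, mseq, List.length_cons, deltaList_length l d]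
  termination_by t => sizeOf t

theorem deltaList_length : ∀ (l : List (ℕ × OTree S)) (d : ℕ),
    (deltaList l d).length = (mseqList l).length
  | [], _ => by rw [deltaList, mseqList]; rfl
  | (m, t) :: rest, d => by
    rw [deltaList, mseqList, List.length_append, List.length_append,
      delta_length t (d + 1), deltaList_length rest d, List.length_cons]
  termination_by l => sizeOf l
end

theorem deltaList_head?_depth : ∀ (l : List (ℕ × OTree S)) (d : ℕ),
    ∀ x ∈ (deltaList l d).head?, x.2 = d + 1
  | [], _ => by intro x hx; rw [deltaList] at hx; simp at hx
  | (m, .node c lc) :: rest, d => by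
    intro x hx
    rw [deltaList, delta] at hx
    simp only [List.cons_append, List.head?_cons, Option.mem_def,
      Option.some.injEq] at hx
    subst hx; rfl

theorem split_append {α : Type*} (P : α → Prop) :
    ∀ (A B X Y : List α), (∀ a ∈ A, P a) → (∀ b ∈ B, P b) →
    (∀ x ∈ X.head?, ¬ P x) → (∀ y ∈ Y.head?, ¬ P y) →
    A ++ X = B ++ Y → A = B ∧ X = Y := by
  intro A
  induction A with
  | nil =>
    intro B X Y _ hB hX _ h
    cases B with
    | nil => exact ⟨rfl, h⟩
    | cons b B' =>
      exfalso
      simp only [List.nil_append, List.cons_append] at h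
      have : X.head? = some b := by rw [h]; rfl
      exact hX b this (hB b (List.mem_cons_self))
  | cons a A' ih =>
    intro B X Y hA hB hX hY h
    cases B with
    | nil =>
      exfalso
      simp only [List.nil_append, List.cons_append] at h
      have : Y.head? = some a := by rw [← h]; rfl
      exact hY a this (hA a (List.mem_cons_self))
    | cons b B' =>
      simp only [List.cons_append, List.cons.injEq] at h
      obtain ⟨rfl, h⟩ := h
      obtain ⟨h1, h2⟩ := ih B' X Y (fun x hx => hA x (List.mem_cons_of_mem _ hx))
        (fun x hx => hB x (List.mem_cons_of_mem _ hx)) hX hY h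
      exact ⟨by rw [h1], h2⟩

mutual
theorem delta_mseq_inj : ∀ (t t' : OTree S) (d : ℕ),
    delta t d = delta t' d → mseq t = mseq t' → t = t'
  | .node c l, .node c' l', d => by
    intro h1 h2
    rw [delta, delta] at h1
    rw [mseq, mseq] at h2
    simp only [List.cons.injEq, Prod.mk.injEq, and_true] at h1
    obtain ⟨rfl, h1⟩ := h1
    rw [deltaList_mseqList_inj l l' d h1 h2]
  termination_by t => sizeOf t

theorem deltaList_mseqList_inj : ∀ (l l' : List (ℕ × OTree S)) (d : ℕ),
    deltaList l d = deltaList l' d → mseqList l = mseqList l' → l = l'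
  | [], [], _ => fun _ _ => rfl
  | [], (m', .node c' lc') :: rest', d => by
    intro h1 _
    rw [deltaList, deltaList, delta] at h1
    simp at h1
  | (m, .node c lc) :: rest, [], d => by
    intro h1 _
    rw [deltaList, deltaList, delta] at h1
    simp at h1
  | (m, .node c lc) :: rest, (m', .node c' lc') :: rest', d => by
    intro h1 h2
    rw [deltaList, deltaList, delta, delta, List.cons_append, List.cons_append] at h1
    simp only [List.cons.injEq, Prod.mk.injEq, and_true] at h1
    obtain ⟨rfl, h1⟩ := h1
    have hsplit := split_append (fun p : S × ℕ => d + 2 ≤ p.2)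
      (deltaList lc (d + 1)) (deltaList lc' (d + 1))
      (deltaList rest d) (deltaList rest' d)
      (fun p hp => deltaList_depth lc (d + 1) p hp)
      (fun p hp => deltaList_depth lc' (d + 1) p hp)
      (fun x hx => by have := deltaList_head?_depth rest d x hx; omega)
      (fun x hx => by have := deltaList_head?_depth rest' d x hx; omega)
      h1
    obtain ⟨hd1, hd2⟩ := hsplit
    rw [mseqList, mseqList, List.cons_append, List.cons_append] at h2
    simp only [mseq, List.cons.injEq] at h2
    obtain ⟨rfl, h2⟩ := h2
    have hlen : (mseqList lc).length = (mseqList lc').length := by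
      rw [← deltaList_length lc (d + 1), ← deltaList_length lc' (d + 1), hd1]
    obtain ⟨hm1, hm2⟩ := List.append_inj h2 hlen
    have e1 : lc = lc' := deltaList_mseqList_inj lc lc' (d + 1) hd1 hm1
    have e2 : rest = rest' := deltaList_mseqList_inj rest rest' d hd2 hm2
    rw [e1, e2]
  termination_by l => sizeOf l
end

theorem sigOf_inj {t t' : OTree S} (h : sigOf t = sigOf t') : t = t' := by
  rw [sigOf, sigOf, Prod.mk.injEq] at h
  exact delta_mseq_inj t t' 0 h.1 h.2

end Aux

end OTree


/-- Two rooted Σ-colored multitrees are rooted isomorphic iff their signatures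
are equal. -/
theorem riso_iff_signature_eq {S : Type} [LinearOrder S] (T T' : OTree S)
    (s s' : List (S × ℕ) × List ℕ)
    (hs : OTree.IsSignature T s) (hs' : OTree.IsSignature T' s') :
    OTree.RIso T T' ↔ s = s' := by
  obtain ⟨⟨τ, hτ, hτs⟩, hmax⟩ := hs
  obtain ⟨⟨τ', hτ', hτs'⟩, hmax'⟩ := hs'
  constructor
  · intro h
    refine OTree.sigLe_antisymm ?_ ?_
    · rw [← hτs]; exact hmax' τ (OTree.riso_trans hτ h)
    · rw [← hτs']; exact hmax τ' (OTree.riso_trans hτ' (OTree.riso_symm h))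
  · intro h
    obtain rfl : τ = τ' := OTree.sigOf_inj (by rw [hτs, hτs', h])
    exact OTree.riso_trans (OTree.riso_symm hτ) hτ'
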